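/- For every integer n ≥ 1, the map sending a snake σ∈S_n^0 to the pair (|σ|, (cs(σ,1),…,cs(σ,n))) is injective on S_n^0; moreover, for every σ∈S_n^0 one has cs(σ) = ∑_{j=1}^{n} cs(σ,j). The same two assertions hold with S_n^0 replaced by S_n^{00} (with the corresponding boundary convention). -/
import Mathlib


open Finset Polynomial

/-- A signed permutation of `[n]` in window notation: the underlying permutation
`σ.1` of absolute values (0-indexed) together with the signs `σ.2` of the entries. -/
abbrev SP (n : ℕ) := Equiv.Perm (Fin n) × (Fin n → Bool)

/-- The window entry `σ_{i+1}` of a signed permutation, as an integer. -/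
def entry {n : ℕ} (σ : SP n) (i : Fin n) : ℤ :=
  (if σ.2 i then -1 else 1) * (((σ.1 i : ℕ) : ℤ) + 1)

/-- `neg σ`: the number of negative entries in the window notation. -/
def negc {n : ℕ} (σ : SP n) : ℕ := (Finset.univ.filter fun i => σ.2 i = true).card

/-- `wex σ`: the number of weak excedances `σ_i ≥ i`. -/
def wexc {n : ℕ} (σ : SP n) : ℕ :=
  (Finset.univ.filter fun i : Fin n => ((i : ℕ) : ℤ) + 1 ≤ entry σ i).card

/-- `fwex σ = 2 wex σ + neg σ`. -/
def fwex {n : ℕ} (σ : SP n) : ℕ := 2 * wexc σ + negc σ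

/-- `cro_B σ`: the number of crossings of the signed permutation `σ`, i.e. pairs
`(i,j)` of (1-indexed) positions with `i<j≤σ_i<σ_j`, or `-i<j≤-σ_i<σ_j`, or
`i>j>σ_i>σ_j`. -/
def croB {n : ℕ} (σ : SP n) : ℕ :=
  (Finset.univ.filter fun p : Fin n × Fin n =>
    ((((p.1 : ℕ) : ℤ) + 1 < ((p.2 : ℕ) : ℤ) + 1) ∧ (((p.2 : ℕ) : ℤ) + 1 ≤ entry σ p.1) ∧
        entry σ p.1 < entry σ p.2) ∨
    ((-(((p.1 : ℕ) : ℤ) + 1) < ((p.2 : ℕ) : ℤ) + 1) ∧ (((p.2 : ℕ) : ℤ) + 1 ≤ -entry σ p.1) ∧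
        -entry σ p.1 < entry σ p.2) ∨
    ((((p.2 : ℕ) : ℤ) + 1 < ((p.1 : ℕ) : ℤ) + 1) ∧ (entry σ p.1 < ((p.2 : ℕ) : ℤ) + 1) ∧
        entry σ p.2 < entry σ p.1)).card

/-- A signed permutation `σ ∈ B_n` is a snake: `σ_1 > σ_2 < σ_3 > ⋯`. -/
abbrev IsSnake {n : ℕ} (σ : SP n) : Prop :=
  ∀ i j : Fin n, (j : ℕ) = (i : ℕ) + 1 →
    (Even (i : ℕ) → entry σ j < entry σ i) ∧ (¬ Even (i : ℕ) → entry σ i < entry σ j)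

/-- `σ ∈ S_n^0`: a snake with `σ_1 > 0`. -/
abbrev IsSnake0 {n : ℕ} (σ : SP n) : Prop :=
  IsSnake σ ∧ ∀ h : 0 < n, 0 < entry σ ⟨0, h⟩

/-- `σ ∈ S_n^00`: a snake with `σ_1 > 0` and `(-1)^n σ_n < 0`. -/
abbrev IsSnake00 {n : ℕ} (σ : SP n) : Prop :=
  IsSnake0 σ ∧ ∀ h : 0 < n, (-1 : ℤ) ^ n * entry σ ⟨n - 1, by omega⟩ < 0

/-- The extended signed word of `σ ∈ S_n^0`: positions `0,…,n+1` carry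
`0, σ_1, …, σ_n, (-1)^n (n+1)`. -/
def word0 {n : ℕ} (σ : SP n) (k : ℕ) : ℤ :=
  if h : 1 ≤ k ∧ k ≤ n then entry σ ⟨k - 1, by omega⟩
  else if k = n + 1 then (-1 : ℤ) ^ n * ((n : ℤ) + 1)
  else 0

/-- The extended signed word of `σ ∈ S_n^00`: positions `0,…,n+1` carry
`0, σ_1, …, σ_n, 0`. -/
def word00 {n : ℕ} (σ : SP n) (k : ℕ) : ℤ :=
  if h : 1 ≤ k ∧ k ≤ n then entry σ ⟨k - 1, by omega⟩ else 0

/-- `cs`: the number of sign changes along an extended word of length `n+2`,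
i.e. the number of `i` with `0 ≤ i ≤ n` and `w_i w_{i+1} < 0`. -/
def csWord (w : ℕ → ℤ) (n : ℕ) : ℕ :=
  ((Finset.range (n + 1)).filter fun i => w i * w (i + 1) < 0).card

/-- `13-2(a, i)`: the number of `j` with `0 ≤ j < i-1` and `a j < a i < a (j+1)`. -/
def ots (a : ℕ → ℕ) (i : ℕ) : ℕ :=
  ((Finset.range (i - 1)).filter fun j => a j < a i ∧ a i < a (j + 1)).card

/-- `2-31(a, i)` (interior positions `1,…,n`): the number of `j` with `i < j ≤ n`
and `a j > a i > a (j+1)`. -/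
def tto (a : ℕ → ℕ) (n i : ℕ) : ℕ :=
  ((Finset.Icc (i + 1) n).filter fun j => a i < a j ∧ a (j + 1) < a i).card

/-- `2-31(a) = ∑_{i=1}^n 2-31(a, i)`. -/
def ttoTot (a : ℕ → ℕ) (n : ℕ) : ℕ := ∑ i ∈ Finset.Icc 1 n, tto a n i

/-- Position `i` is a valley with sign changes on both sides. -/
abbrev Xcond (w : ℕ → ℤ) (i : ℕ) : Prop :=
  (w i).natAbs < (w (i - 1)).natAbs ∧ (w i).natAbs < (w (i + 1)).natAbs ∧
    w (i - 1) * w i < 0 ∧ w i * w (i + 1) < 0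

/-- Position `i` is a double ascent or a double descent. -/
abbrev Ycond (w : ℕ → ℤ) (i : ℕ) : Prop :=
  ((w (i - 1)).natAbs < (w i).natAbs ∧ (w i).natAbs < (w (i + 1)).natAbs) ∨
    ((w (i + 1)).natAbs < (w i).natAbs ∧ (w i).natAbs < (w (i - 1)).natAbs)

/-- Position `i` is a peak. -/
abbrev Zcond (w : ℕ → ℤ) (i : ℕ) : Prop :=
  (w (i - 1)).natAbs < (w i).natAbs ∧ (w (i + 1)).natAbs < (w i).natAbs

/-- The number of sign changes `cs(σ, j)` recorded at an interior position `i` of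
an extended signed word `w`: `0` at a valley without adjacent sign changes, `2`
at a valley with sign changes on both sides, `0` at a peak and `1` otherwise. -/
def csAt (w : ℕ → ℤ) (i : ℕ) : ℕ :=
  if (w i).natAbs < (w (i - 1)).natAbs ∧ (w i).natAbs < (w (i + 1)).natAbs then
    (if w (i - 1) * w i < 0 ∧ w i * w (i + 1) < 0 then 2 else 0)
  else if (w (i - 1)).natAbs < (w i).natAbs ∧ (w (i + 1)).natAbs < (w i).natAbs then 0
  else 1

/-- `cs(σ, j)` for the value `j+1` of a snake `σ ∈ S_n^0`: the value recorded at
the position of `j+1` in the extended word. -/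
def csVal0 {n : ℕ} (σ : SP n) (j : Fin n) : ℕ :=
  csAt (word0 σ) ((σ.1.symm j : ℕ) + 1)

/-- `cs(σ, j)` for the value `j+1` of a snake `σ ∈ S_n^00`. -/
def csVal00 {n : ℕ} (σ : SP n) (j : Fin n) : ℕ :=
  csAt (word00 σ) ((σ.1.symm j : ℕ) + 1)

section Statement18Aux

/-! ### General lemmas about alternating words -/

/-- alternation hypothesis for an extended word -/
def AltW (w : ℕ → ℤ) (n : ℕ) : Prop :=
  ∀ k ≤ n, (k % 2 = 0 → w k < w (k+1)) ∧ (k % 2 = 1 → w (k+1) < w k)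

lemma extremum {w : ℕ → ℤ} {n : ℕ} (hA : AltW w n) {i : ℕ} (h1 : 1 ≤ i) (h2 : i ≤ n) :
    (w (i-1) < w i ∧ w (i+1) < w i) ∨ (w i < w (i-1) ∧ w i < w (i+1)) := by
  obtain ⟨k, rfl⟩ : ∃ k, i = k + 1 := ⟨i - 1, by omega⟩
  have ha := hA k (by omega)
  have hb := hA (k+1) h2
  simp only [Nat.add_sub_cancel]
  rcases Nat.even_or_odd k with he | ho
  · rw [Nat.even_iff] at he
    exact Or.inl ⟨ha.1 he, hb.2 (by omega)⟩
  · rw [Nat.odd_iff] at ho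
    exact Or.inr ⟨ha.2 ho, hb.1 (by omega)⟩

lemma csAt_eq {w : ℕ → ℤ} {n : ℕ} (hA : AltW w n)
    (hD : ∀ k ≤ n, (w k).natAbs ≠ (w (k+1)).natAbs)
    {i : ℕ} (h1 : 1 ≤ i) (h2 : i ≤ n) :
    csAt w i = ((if w (i-1) * w i < 0 ∧ (w i).natAbs < (w (i-1)).natAbs then 1 else 0)
      + (if w i * w (i+1) < 0 ∧ (w i).natAbs < (w (i+1)).natAbs then 1 else 0)) := by
  have hext := extremum hA h1 h2
  have hDl := hD (i-1) (by omega)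
  have hDr := hD i h2
  rw [show i - 1 + 1 = i from by omega] at hDl
  unfold csAt
  split_ifs <;> simp only [mul_neg_iff] at * <;> omega

lemma csWord_eq {w : ℕ → ℤ} {n : ℕ} (hA : AltW w n)
    (hD : ∀ k ≤ n, (w k).natAbs ≠ (w (k+1)).natAbs)
    (hZ : w 0 = 0) (hE : (w (n+1)).natAbs < (w n).natAbs → w (n+1) = 0) :
    csWord w n = ∑ e ∈ Finset.range n, csAt w (e+1) := by
  have key : ∀ e ∈ Finset.range (n+1), (if w e * w (e+1) < 0 then (1:ℕ) else 0)
      = (if w e * w (e+1) < 0 ∧ (w (e+1)).natAbs < (w e).natAbs then 1 else 0)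
      + (if w e * w (e+1) < 0 ∧ (w e).natAbs < (w (e+1)).natAbs then 1 else 0) := by
    intro e he
    rw [Finset.mem_range] at he
    have := hD e (by omega)
    split_ifs <;> simp only [mul_neg_iff] at * <;> omega
  rw [csWord, Finset.card_filter, Finset.sum_congr rfl key, Finset.sum_add_distrib]
  rw [Finset.sum_range_succ, Finset.sum_range_succ']
  have hRn : (if w n * w (n+1) < 0 ∧ (w (n+1)).natAbs < (w n).natAbs then (1:ℕ) else 0) = 0 := by
    split_ifs with h
    · exfalso
      have h0 := hE h.2
      rw [h0] at h
      simp at h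
    · rfl
  have hL0 : (if w 0 * w 1 < 0 ∧ (w 0).natAbs < (w 1).natAbs then (1:ℕ) else 0) = 0 := by
    rw [hZ]; simp
  rw [hRn, hL0]
  have heq : ∀ e ∈ Finset.range n,
      (if w e * w (e+1) < 0 ∧ (w (e+1)).natAbs < (w e).natAbs then (1:ℕ) else 0)
      + (if w (e+1) * w (e+1+1) < 0 ∧ (w (e+1)).natAbs < (w (e+1+1)).natAbs then 1 else 0)
      = csAt w (e+1) := by
    intro e he
    rw [Finset.mem_range] at he
    rw [csAt_eq hA hD (by omega : 1 ≤ e+1) (by omega : e+1 ≤ n)]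
    simp only [Nat.add_sub_cancel]
  rw [← Finset.sum_congr rfl heq, Finset.sum_add_distrib]
  ring

lemma csAt_valley {w : ℕ → ℤ} {n : ℕ} (hA : AltW w n) {i : ℕ} (h1 : 1 ≤ i) (h2 : i ≤ n)
    (hv : (w i).natAbs < (w (i-1)).natAbs ∧ (w i).natAbs < (w (i+1)).natAbs) :
    (csAt w i = 2 ↔ w (i-1) * w i < 0) ∧ (csAt w i = 2 ↔ w i * w (i+1) < 0) := by
  have hext := extremum hA h1 h2
  unfold csAt
  split_ifs <;>
    simp only [mul_neg_iff, true_iff, false_iff, iff_true, iff_false] at * <;> omega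

lemma forcedR {w : ℕ → ℤ} {n : ℕ} (hA : AltW w n) {i : ℕ} (h1 : 1 ≤ i) (h2 : i ≤ n)
    (hm : (w (i-1)).natAbs < (w i).natAbs ∧ (w i).natAbs < (w (i+1)).natAbs) :
    w i * w (i+1) < 0 := by
  have hext := extremum hA h1 h2
  simp only [mul_neg_iff] at *
  omega

lemma forcedL {w : ℕ → ℤ} {n : ℕ} (hA : AltW w n) {i : ℕ} (h1 : 1 ≤ i) (h2 : i ≤ n)
    (hm : (w (i+1)).natAbs < (w i).natAbs ∧ (w i).natAbs < (w (i-1)).natAbs) :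
    w (i-1) * w i < 0 := by
  have hext := extremum hA h1 h2
  simp only [mul_neg_iff] at *
  omega

lemma sign_change_iff {w w' : ℕ → ℤ} {n : ℕ} (hA : AltW w n) (hA' : AltW w' n)
    (hD : ∀ k ≤ n, (w k).natAbs ≠ (w (k+1)).natAbs)
    (habs : ∀ i ≤ n+1, (w i).natAbs = (w' i).natAbs)
    (hcs : ∀ i, 1 ≤ i → i ≤ n → csAt w i = csAt w' i)
    {k : ℕ} (h1 : 1 ≤ k) (h2 : k + 1 ≤ n) :
    (w k * w (k+1) < 0 ↔ w' k * w' (k+1) < 0) := by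
  rcases (hD k (by omega)).lt_or_gt with hlt | hlt
  · rcases (hD (k-1) (by omega)).lt_or_gt with h2' | h2' <;>
      rw [show k - 1 + 1 = k from by omega] at h2'
    · have f1 := forcedR hA h1 (by omega) ⟨h2', hlt⟩
      have f2 := forcedR hA' h1 (by omega) ⟨by
          rw [← habs (k-1) (by omega), ← habs k (by omega)]; exact h2',
        by rw [← habs k (by omega), ← habs (k+1) (by omega)]; exact hlt⟩
      exact iff_of_true f1 f2
    · have v1 := (csAt_valley hA h1 (by omega) ⟨h2', hlt⟩).2
      have v2 := (csAt_valley hA' h1 (by omega) ⟨by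
          rw [← habs (k-1) (by omega), ← habs k (by omega)]; exact h2',
        by rw [← habs k (by omega), ← habs (k+1) (by omega)]; exact hlt⟩).2
      rw [← v1, ← v2, hcs k h1 (by omega)]
  · rcases (hD (k+1) h2).lt_or_gt with h2' | h2'
    · have v1 := (csAt_valley hA (by omega : 1 ≤ k+1) h2 (by
          simpa only [Nat.add_sub_cancel] using And.intro hlt h2')).1
      have v2 := (csAt_valley hA' (by omega : 1 ≤ k+1) h2 (by
          simp only [Nat.add_sub_cancel]
          rw [← habs k (by omega), ← habs (k+1) (by omega), ← habs (k+2) (by omega)]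
          exact ⟨hlt, h2'⟩)).1
      simp only [Nat.add_sub_cancel] at v1 v2
      rw [← v1, ← v2, hcs (k+1) (by omega) h2]
    · have f1 := forcedL hA (by omega : 1 ≤ k+1) h2 (by
        simpa only [Nat.add_sub_cancel] using And.intro h2' hlt)
      have f2 := forcedL hA' (by omega : 1 ≤ k+1) h2 (by
        simp only [Nat.add_sub_cancel]
        rw [← habs k (by omega), ← habs (k+1) (by omega), ← habs (k+2) (by omega)]
        exact ⟨h2', hlt⟩)
      simp only [Nat.add_sub_cancel] at f1 f2
      exact iff_of_true f1 f2

lemma word_eq {w w' : ℕ → ℤ} {n : ℕ} (hA : AltW w n) (hA' : AltW w' n)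
    (hD : ∀ k ≤ n, (w k).natAbs ≠ (w (k+1)).natAbs)
    (hN : ∀ i, 1 ≤ i → i ≤ n → w i ≠ 0)
    (habs : ∀ i ≤ n+1, (w i).natAbs = (w' i).natAbs)
    (hcs : ∀ i, 1 ≤ i → i ≤ n → csAt w i = csAt w' i)
    (hZ : w 0 = 0) (hZ' : w' 0 = 0) :
    ∀ i, 1 ≤ i → i ≤ n → w i = w' i := by
  intro i
  induction i with
  | zero => omega
  | succ k ih =>
    intro _ hk
    rcases Nat.eq_zero_or_pos k with rfl | hk1
    · have p1 : w 0 < w 1 := (hA 0 (by omega)).1 rfl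
      have p2 : w' 0 < w' 1 := (hA' 0 (by omega)).1 rfl
      have := habs 1 (by omega)
      rw [hZ] at p1; rw [hZ'] at p2
      show w 1 = w' 1
      omega
    · have hprev := ih hk1 (by omega)
      have hiff := sign_change_iff hA hA' hD habs hcs hk1 hk
      have hx : w k ≠ 0 := hN k hk1 (by omega)
      have hy : w (k+1) ≠ 0 := hN (k+1) (by omega) hk
      have habs' := habs (k+1) (by omega)
      rw [hprev] at hiff hx
      simp only [mul_neg_iff] at hiff
      omega

end Statement18Aux

section Statement18Aux2

variable {n : ℕ}

lemma entry_natAbs (σ : SP n) (i : Fin n) : (entry σ i).natAbs = (σ.1 i : ℕ) + 1 := by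
  unfold entry
  cases h : σ.2 i <;> simp only [h, Bool.false_eq_true, ite_true, ite_false, neg_mul, one_mul,
    if_true, if_false] <;> omega

lemma word0_int (σ : SP n) {k : ℕ} (h1 : 1 ≤ k) (h2 : k ≤ n) :
    word0 σ k = entry σ ⟨k-1, by omega⟩ := dif_pos ⟨h1, h2⟩

lemma word0_zero (σ : SP n) : word0 σ 0 = 0 := by
  unfold word0
  rw [dif_neg (by omega), if_neg (by omega)]

lemma word0_top (σ : SP n) : word0 σ (n+1) = (-1)^n * ((n:ℤ)+1) := by
  unfold word0
  rw [dif_neg (by omega), if_pos rfl]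

lemma word00_int (σ : SP n) {k : ℕ} (h1 : 1 ≤ k) (h2 : k ≤ n) :
    word00 σ k = entry σ ⟨k-1, by omega⟩ := dif_pos ⟨h1, h2⟩

lemma word00_zero (σ : SP n) : word00 σ 0 = 0 := by
  unfold word00
  rw [dif_neg (by omega)]

lemma word00_top (σ : SP n) : word00 σ (n+1) = 0 := by
  unfold word00
  rw [dif_neg (by omega)]

lemma negonepow_natAbs : ((-1:ℤ)^n * ((n:ℤ)+1)).natAbs = n+1 := by
  rcases Nat.even_or_odd n with h | h
  · rw [h.neg_one_pow, one_mul]; omega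
  · rw [h.neg_one_pow, neg_one_mul]; omega

lemma word0_props (σ : SP n) (hn : 1 ≤ n) (hσ : IsSnake0 σ) :
    AltW (word0 σ) n ∧ (∀ k ≤ n, ((word0 σ) k).natAbs ≠ ((word0 σ) (k+1)).natAbs) ∧
    (∀ i, 1 ≤ i → i ≤ n → word0 σ i ≠ 0) ∧
    ((word0 σ (n+1)).natAbs < (word0 σ n).natAbs → word0 σ (n+1) = 0) := by
  have habs : ∀ (k : ℕ) (h1 : 1 ≤ k) (h2 : k ≤ n),
      (word0 σ k).natAbs = (σ.1 ⟨k-1, by omega⟩ : ℕ) + 1 := by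
    intro k h1 h2
    rw [word0_int σ h1 h2, entry_natAbs]
  refine ⟨?_, ?_, ?_, ?_⟩
  · -- AltW
    intro k hk
    rcases Nat.eq_zero_or_pos k with rfl | hk1
    · refine ⟨fun _ => ?_, fun h => by omega⟩
      rw [word0_zero, word0_int σ (by omega) hn]
      exact hσ.2 hn
    · by_cases hkn : k = n
      · subst hkn
        constructor
        · intro hpar
          have heven : Even k := Nat.even_iff.mpr hpar
          rw [word0_int σ hk1 le_rfl, word0_top σ, heven.neg_one_pow, one_mul]
          have h1 := entry_natAbs σ ⟨k-1, by omega⟩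
          have h2 : (σ.1 ⟨k-1, by omega⟩ : ℕ) < k := Fin.is_lt _
          omega
        · intro hpar
          have hodd : Odd k := Nat.odd_iff.mpr hpar
          rw [word0_int σ hk1 le_rfl, word0_top σ, hodd.neg_one_pow, neg_one_mul]
          have h1 := entry_natAbs σ ⟨k-1, by omega⟩
          have h2 : (σ.1 ⟨k-1, by omega⟩ : ℕ) < k := Fin.is_lt _
          omega
      · -- 1 ≤ k ≤ n - 1
        have hkn' : k + 1 ≤ n := by omega
        have hsn := hσ.1 ⟨k-1, by omega⟩ ⟨k, by omega⟩ (by simp; omega)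
        rw [word0_int σ hk1 (by omega), word0_int σ (by omega) hkn']
        constructor
        · intro hpar
          exact hsn.2 (by simp only [Nat.even_iff]; omega)
        · intro hpar
          exact hsn.1 (by simp only [Nat.even_iff]; omega)
  · -- distinct adjacent natAbs
    intro k hk
    rcases Nat.eq_zero_or_pos k with rfl | hk1
    · rw [word0_zero, habs 1 le_rfl hn]
      simp
    · by_cases hkn : k = n
      · subst hkn
        rw [word0_top σ, negonepow_natAbs, habs k hk1 le_rfl]
        have h2 : (σ.1 ⟨k-1, by omega⟩ : ℕ) < k := Fin.is_lt _
        omega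
      · rw [habs k hk1 (by omega), habs (k+1) (by omega) (by omega)]
        intro heq
        have hv : σ.1 ⟨k-1, by omega⟩ = σ.1 ⟨k+1-1, by omega⟩ := Fin.ext (by omega)
        have h3 := σ.1.injective hv
        rw [Fin.ext_iff] at h3
        simp only [Nat.add_sub_cancel] at h3
        omega
  · -- nonzero interior
    intro i h1 h2
    have := habs i h1 h2
    intro h
    rw [h] at this
    simp at this
  · -- hE
    intro h
    exfalso
    rw [word0_top σ, negonepow_natAbs, habs n hn le_rfl] at h
    have h2 : (σ.1 ⟨n-1, by omega⟩ : ℕ) < n := Fin.is_lt _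
    omega

lemma word00_props (σ : SP n) (hn : 1 ≤ n) (hσ : IsSnake00 σ) :
    AltW (word00 σ) n ∧ (∀ k ≤ n, ((word00 σ) k).natAbs ≠ ((word00 σ) (k+1)).natAbs) ∧
    (∀ i, 1 ≤ i → i ≤ n → word00 σ i ≠ 0) ∧
    ((word00 σ (n+1)).natAbs < (word00 σ n).natAbs → word00 σ (n+1) = 0) := by
  have habs : ∀ (k : ℕ) (h1 : 1 ≤ k) (h2 : k ≤ n),
      (word00 σ k).natAbs = (σ.1 ⟨k-1, by omega⟩ : ℕ) + 1 := by
    intro k h1 h2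
    rw [word00_int σ h1 h2, entry_natAbs]
  refine ⟨?_, ?_, ?_, fun _ => word00_top σ⟩
  · -- AltW
    intro k hk
    rcases Nat.eq_zero_or_pos k with rfl | hk1
    · refine ⟨fun _ => ?_, fun h => by omega⟩
      rw [word00_zero, word00_int σ (by omega) hn]
      exact hσ.1.2 hn
    · by_cases hkn : k = n
      · subst hkn
        have hlast := hσ.2 (by omega)
        rw [word00_int σ hk1 le_rfl, word00_top σ]
        constructor
        · intro hpar
          have heven : Even k := Nat.even_iff.mpr hpar
          rw [heven.neg_one_pow, one_mul] at hlast
          exact hlast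
        · intro hpar
          have hodd : Odd k := Nat.odd_iff.mpr hpar
          rw [hodd.neg_one_pow, neg_one_mul] at hlast
          omega
      · have hkn' : k + 1 ≤ n := by omega
        have hsn := hσ.1.1 ⟨k-1, by omega⟩ ⟨k, by omega⟩ (by simp; omega)
        rw [word00_int σ hk1 (by omega), word00_int σ (by omega) hkn']
        constructor
        · intro hpar
          exact hsn.2 (by simp only [Nat.even_iff]; omega)
        · intro hpar
          exact hsn.1 (by simp only [Nat.even_iff]; omega)
  · -- distinct adjacent natAbs
    intro k hk
    rcases Nat.eq_zero_or_pos k with rfl | hk1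
    · rw [word00_zero, habs 1 le_rfl hn]
      simp
    · by_cases hkn : k = n
      · subst hkn
        rw [word00_top σ, habs k hk1 le_rfl]
        simp
      · rw [habs k hk1 (by omega), habs (k+1) (by omega) (by omega)]
        intro heq
        have hv : σ.1 ⟨k-1, by omega⟩ = σ.1 ⟨k+1-1, by omega⟩ := Fin.ext (by omega)
        have h3 := σ.1.injective hv
        rw [Fin.ext_iff] at h3
        simp only [Nat.add_sub_cancel] at h3
        omega
  · intro i h1 h2
    have := habs i h1 h2
    intro h
    rw [h] at this
    simp at this

end Statement18Aux2

section Statement18Aux3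

variable {n : ℕ}

lemma sum0 (σ : SP n) (hn : 1 ≤ n) (hσ : IsSnake0 σ) :
    csWord (word0 σ) n = ∑ j : Fin n, csVal0 σ j := by
  obtain ⟨hA, hD, hN, hE⟩ := word0_props σ hn hσ
  rw [csWord_eq hA hD (word0_zero σ) hE]
  have h1 : ∀ j ∈ Finset.univ, csVal0 σ j
      = (fun x : Fin n => csAt (word0 σ) ((x:ℕ)+1)) (σ.1.symm j) := fun _ _ => rfl
  rw [Finset.sum_congr rfl h1, Equiv.sum_comp σ.1.symm (fun x : Fin n => csAt (word0 σ) ((x:ℕ)+1))]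
  exact (Fin.sum_univ_eq_sum_range (fun m => csAt (word0 σ) (m+1)) n).symm

lemma sum00 (σ : SP n) (hn : 1 ≤ n) (hσ : IsSnake00 σ) :
    csWord (word00 σ) n = ∑ j : Fin n, csVal00 σ j := by
  obtain ⟨hA, hD, hN, hE⟩ := word00_props σ hn hσ
  rw [csWord_eq hA hD (word00_zero σ) hE]
  have h1 : ∀ j ∈ Finset.univ, csVal00 σ j
      = (fun x : Fin n => csAt (word00 σ) ((x:ℕ)+1)) (σ.1.symm j) := fun _ _ => rfl
  rw [Finset.sum_congr rfl h1,
    Equiv.sum_comp σ.1.symm (fun x : Fin n => csAt (word00 σ) ((x:ℕ)+1))]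
  exact (Fin.sum_univ_eq_sum_range (fun m => csAt (word00 σ) (m+1)) n).symm

lemma habs0 (σ τ : SP n) (hperm : σ.1 = τ.1) :
    ∀ i ≤ n+1, ((word0 σ) i).natAbs = ((word0 τ) i).natAbs := by
  intro i hi
  by_cases h : 1 ≤ i ∧ i ≤ n
  · rw [word0_int σ h.1 h.2, word0_int τ h.1 h.2, entry_natAbs, entry_natAbs, hperm]
  · by_cases h2 : i = n+1
    · subst h2
      rw [word0_top σ, word0_top τ]
    · have h3 : i = 0 := by omega
      subst h3
      rw [word0_zero, word0_zero]

lemma habs00 (σ τ : SP n) (hperm : σ.1 = τ.1) :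
    ∀ i ≤ n+1, ((word00 σ) i).natAbs = ((word00 τ) i).natAbs := by
  intro i hi
  by_cases h : 1 ≤ i ∧ i ≤ n
  · rw [word00_int σ h.1 h.2, word00_int τ h.1 h.2, entry_natAbs, entry_natAbs, hperm]
  · by_cases h2 : i = n+1
    · subst h2
      rw [word00_top, word00_top]
    · have h3 : i = 0 := by omega
      subst h3
      rw [word00_zero, word00_zero]

/-- recover the signed permutation from its word on interior positions -/
lemma eq_of_word_eq (σ τ : SP n) (hperm : σ.1 = τ.1)
    (hw : ∀ x : Fin n, entry σ x = entry τ x) : σ = τ := by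
  obtain ⟨σ1, σ2⟩ := σ
  obtain ⟨τ1, τ2⟩ := τ
  simp only [Prod.mk.injEq] at hperm ⊢
  subst hperm
  refine ⟨rfl, funext fun x => ?_⟩
  have := hw x
  unfold entry at this
  simp only at this
  cases h1 : σ2 x <;> cases h2 : τ2 x <;>
    simp only [h1, h2, Bool.false_eq_true, ite_true, ite_false, if_true, if_false,
      neg_mul, one_mul] at this <;>
    first | rfl | omega

lemma inj0 (σ τ : SP n) (hn : 1 ≤ n) (hσ : IsSnake0 σ) (hτ : IsSnake0 τ)
    (hperm : σ.1 = τ.1) (hcs' : ∀ j, csVal0 σ j = csVal0 τ j) : σ = τ := by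
  obtain ⟨hA, hD, hN, hE⟩ := word0_props σ hn hσ
  obtain ⟨hA', hD', hN', hE'⟩ := word0_props τ hn hτ
  have habs := habs0 σ τ hperm
  have hcs : ∀ i, 1 ≤ i → i ≤ n → csAt (word0 σ) i = csAt (word0 τ) i := by
    intro i h1 h2
    have hx : i - 1 < n := by omega
    have hthis := hcs' (σ.1 ⟨i-1, hx⟩)
    unfold csVal0 at hthis
    rw [hperm, Equiv.symm_apply_apply] at hthis
    have key : csAt (word0 σ) ((i-1)+1) = csAt (word0 τ) ((i-1)+1) := hthis
    rw [show i = i - 1 + 1 from by omega]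
    exact key
  have weq := word_eq hA hA' hD hN habs hcs (word0_zero σ) (word0_zero τ)
  refine eq_of_word_eq σ τ hperm fun x => ?_
  have hxlt := x.isLt
  have := weq ((x:ℕ)+1) (by omega) (by omega)
  rw [word0_int σ (by omega) (by omega), word0_int τ (by omega) (by omega)] at this
  exact this

lemma inj00 (σ τ : SP n) (hn : 1 ≤ n) (hσ : IsSnake00 σ) (hτ : IsSnake00 τ)
    (hperm : σ.1 = τ.1) (hcs' : ∀ j, csVal00 σ j = csVal00 τ j) : σ = τ := by
  obtain ⟨hA, hD, hN, hE⟩ := word00_props σ hn hσ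
  obtain ⟨hA', hD', hN', hE'⟩ := word00_props τ hn hτ
  have habs := habs00 σ τ hperm
  have hcs : ∀ i, 1 ≤ i → i ≤ n → csAt (word00 σ) i = csAt (word00 τ) i := by
    intro i h1 h2
    have hx : i - 1 < n := by omega
    have hthis := hcs' (σ.1 ⟨i-1, hx⟩)
    unfold csVal00 at hthis
    rw [hperm, Equiv.symm_apply_apply] at hthis
    have key : csAt (word00 σ) ((i-1)+1) = csAt (word00 τ) ((i-1)+1) := hthis
    rw [show i = i - 1 + 1 from by omega]
    exact key
  have weq := word_eq hA hA' hD hN habs hcs (word00_zero σ) (word00_zero τ)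
  refine eq_of_word_eq σ τ hperm fun x => ?_
  have hxlt := x.isLt
  have := weq ((x:ℕ)+1) (by omega) (by omega)
  rw [word00_int σ (by omega) (by omega), word00_int τ (by omega) (by omega)] at this
  exact this

end Statement18Aux3

/-- Lemma 5.1: for `n ≥ 1`, each snake of `S_n^0` (resp. of `S_n^00`) is uniquely
determined by `|σ|` and its `cs`-vector `(cs(σ,1),…,cs(σ,n))`, and
`cs(σ) = ∑_{j=1}^n cs(σ,j)`. -/
theorem statement18 (n : ℕ) (hn : 1 ≤ n) :
    (∀ σ τ : SP n, IsSnake0 σ → IsSnake0 τ → σ.1 = τ.1 →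
      (∀ j : Fin n, csVal0 σ j = csVal0 τ j) → σ = τ) ∧
    (∀ σ : SP n, IsSnake0 σ → csWord (word0 σ) n = ∑ j : Fin n, csVal0 σ j) ∧
    (∀ σ τ : SP n, IsSnake00 σ → IsSnake00 τ → σ.1 = τ.1 →
      (∀ j : Fin n, csVal00 σ j = csVal00 τ j) → σ = τ) ∧
    (∀ σ : SP n, IsSnake00 σ → csWord (word00 σ) n = ∑ j : Fin n, csVal00 σ j) := by
  exact ⟨fun σ τ hσ hτ hperm hcs => inj0 σ τ hn hσ hτ hperm hcs,
    fun σ hσ => sum0 σ hn hσ,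
    fun σ τ hσ hτ hperm hcs => inj00 σ τ hn hσ hτ hperm hcs,
    fun σ hσ => sum00 σ hn hσ⟩
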